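/- Consider the nonautonomous system on the circle S^1 generated by the rotations f_n(θ) = θ + 2π·Σ_{i=1}^{k} 1/i when n = 2k−1 and f_n(θ) = θ − 2π·Σ_{i=1}^{k} 1/i when n = 2k. Then every point of S^1 is periodic with period 2 (ω_{2n}(θ) = θ for all n ∈ ℤ), the system is equicontinuous, and the orbit of every point is dense in S^1 (hence the system is topologically transitive but not sensitive). -/

import Mathlib

open Metric Filter

/-- Forward time maps: `posComp f n = f n ∘ ⋯ ∘ f 1`. -/
def posComp {X : Type*} [TopologicalSpace X] (f : ℕ → X ≃ₜ X) : ℕ → X → X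
  | 0 => id
  | n + 1 => (f (n + 1)) ∘ posComp f n

/-- Backward time maps: `negComp f n = f 1⁻¹ ∘ ⋯ ∘ f n⁻¹`. -/
def negComp {X : Type*} [TopologicalSpace X] (f : ℕ → X ≃ₜ X) : ℕ → X → X
  | 0 => id
  | n + 1 => negComp f n ∘ (f (n + 1)).symm

/-- The time-`n` map `ω_n` of the nonautonomous system generated by `f`. -/
def omegaMap {X : Type*} [TopologicalSpace X] (f : ℕ → X ≃ₜ X) (n : ℤ) : X → X :=
  if 0 ≤ n then posComp f n.toNat else negComp f (-n).toNat

/-- The family is commutative. -/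
def Commutes {X : Type*} [TopologicalSpace X] (f : ℕ → X ≃ₜ X) : Prop :=
  ∀ i j, ∀ x : X, f i (f j x) = f j (f i x)

/-- Orbit `O(x) = {ω_n x : n ∈ ℤ}`. -/
def orbit' {X : Type*} [TopologicalSpace X] (f : ℕ → X ≃ₜ X) (x : X) : Set X :=
  Set.range fun n : ℤ => omegaMap f n x

/-- Orbital hull `O_H(x) = {ω_{k_n} ∘ ⋯ ∘ ω_{k_1} x : k_i ∈ ℤ}`. -/
def orbitalHull {X : Type*} [TopologicalSpace X] (f : ℕ → X ≃ₜ X) (x : X) : Set X :=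
  {y | ∃ l : List ℤ, y = l.foldr (fun k z => omegaMap f k z) x}

/-- Truncated orbital hull of order `k`. -/
def truncHull {X : Type*} [TopologicalSpace X] (f : ℕ → X ≃ₜ X) (k : ℕ) (x : X) : Set X :=
  {y | ∃ l : List ℤ, (∀ r ∈ l, |r| ≤ (k : ℤ)) ∧ y = l.foldr (fun j z => omegaMap f j z) x}

/-- `x` is periodic of period `r`: `ω_{n r} x = x` for all `n ∈ ℤ`. -/
def PeriodicPt {X : Type*} [TopologicalSpace X] (f : ℕ → X ≃ₜ X) (r : ℕ) (x : X) : Prop :=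
  ∀ n : ℤ, omegaMap f (n * r) x = x

/-- `Y` is invariant: `ω_k(Y) ⊆ Y` for all `k ∈ ℤ`. -/
def Invariant {X : Type*} [TopologicalSpace X] (f : ℕ → X ≃ₜ X) (Y : Set X) : Prop :=
  ∀ k : ℤ, omegaMap f k '' Y ⊆ Y

/-- The system is minimal: no proper nonempty closed invariant subset. -/
def MinimalSys {X : Type*} [TopologicalSpace X] (f : ℕ → X ≃ₜ X) : Prop :=
  ∀ Y : Set X, Y.Nonempty → IsClosed Y → Invariant f Y → Y = Set.univ

/-- Equicontinuity of the system. -/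
def Equicont {X : Type*} [MetricSpace X] (f : ℕ → X ≃ₜ X) : Prop :=
  ∀ ε > (0 : ℝ), ∃ δ > (0 : ℝ), ∀ a b : X, dist a b < δ →
    ∀ n : ℤ, dist (omegaMap f n a) (omegaMap f n b) < ε

/-- `S ⊆ ℤ` is `M`-syndetic. -/
def MSyndetic (S : Set ℤ) (M : ℤ) : Prop :=
  ∀ a : ℤ, ∃ n ∈ S, a ≤ n ∧ n < a + M

/-- `x` is almost periodic. -/
def AlmostPeriodicPt {X : Type*} [MetricSpace X] (f : ℕ → X ≃ₜ X) (x : X) : Prop :=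
  ∀ ε > (0 : ℝ), ∃ M : ℤ, 0 < M ∧ MSyndetic {n : ℤ | dist (omegaMap f n x) x < ε} M

/-- The system is sensitive at `x`. -/
def SensitiveAt {X : Type*} [MetricSpace X] (f : ℕ → X ≃ₜ X) (x : X) : Prop :=
  ∃ δ > (0 : ℝ), ∀ U : Set X, IsOpen U → x ∈ U → ∃ m : ℤ, δ < diam (omegaMap f m '' U)

/-- Topological transitivity. -/
def TopTransitive {X : Type*} [TopologicalSpace X] (f : ℕ → X ≃ₜ X) : Prop :=
  ∀ U V : Set X, IsOpen U → IsOpen V → U.Nonempty → V.Nonempty →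
    ∃ k : ℤ, ((omegaMap f k '' U) ∩ V).Nonempty

instance : Fact ((0 : ℝ) < 2 * Real.pi) := ⟨by positivity⟩


noncomputable section AuxHarm

/-- Partial sums of the harmonic series. -/
def Hsum (n : ℕ) : ℝ := ∑ i ∈ Finset.range n, (1 : ℝ) / (i + 1)

lemma Hsum_mono : Monotone Hsum := by
  intro a b hab
  exact Finset.sum_le_sum_of_subset_of_nonneg (Finset.range_subset_range.mpr hab)
    (fun i _ _ => by positivity)

lemma Hsum_succ (n : ℕ) : Hsum (n + 1) = Hsum n + 1 / (n + 1) := by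
  simp [Hsum, Finset.sum_range_succ]

lemma harm_approx (t : ℝ) {ε : ℝ} (hε : 0 < ε) :
    ∃ (k : ℕ) (m : ℤ), |Hsum (k + 1) - (t + m)| < ε := by
  classical
  obtain ⟨K, hK⟩ := exists_nat_one_div_lt hε
  obtain ⟨m, hm⟩ : ∃ m : ℤ, Hsum (K + 1) - t ≤ (m : ℝ) := ⟨⌈Hsum (K+1) - t⌉, Int.le_ceil _⟩
  set s : ℝ := t + m with hs
  have hsK : Hsum (K + 1) ≤ s := by linarith
  have htop : Filter.Tendsto Hsum Filter.atTop Filter.atTop :=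
    Real.tendsto_sum_range_one_div_nat_succ_atTop
  obtain ⟨N, hN⟩ := (htop.eventually_gt_atTop s).exists
  have hex : ∃ n, s < Hsum n := ⟨N, hN⟩
  set n₀ := Nat.find hex with hn₀
  have hP : s < Hsum n₀ := Nat.find_spec hex
  have hKn : K + 1 < n₀ := by
    by_contra h
    push_neg at h
    exact absurd (lt_of_lt_of_le hP (Hsum_mono h)) (not_lt.mpr hsK)
  have hmin : ¬ (s < Hsum (n₀ - 1)) := Nat.find_min hex (by omega)
  push_neg at hmin
  refine ⟨n₀ - 2, m, ?_⟩
  have hk1 : n₀ - 2 + 1 = n₀ - 1 := by omega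
  rw [hk1, ← hs]
  have hstep : Hsum n₀ = Hsum (n₀ - 1) + 1 / (↑(n₀ - 1) + 1) := by
    conv_lhs => rw [show n₀ = n₀ - 1 + 1 from by omega]
    rw [Hsum_succ]
  have h1 : (1 : ℝ) / (↑(n₀ - 1) + 1) ≤ 1 / (K + 1) := by
    apply one_div_le_one_div_of_le (by positivity)
    have : (K : ℝ) + 1 ≤ ↑(n₀ - 1) := by exact_mod_cast (by omega : K + 1 ≤ n₀ - 1)
    linarith
  rw [abs_sub_lt_iff]
  constructor
  · linarith
  · have : s < Hsum (n₀ - 1) + 1 / (↑(n₀ - 1) + 1) := hstep ▸ hP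
    linarith

lemma harm_dense_circle (y : AddCircle (2 * Real.pi)) {ε : ℝ} (hε : 0 < ε) :
    ∃ k : ℕ, dist y ((2 * Real.pi * Hsum (k + 1) : ℝ) : AddCircle (2 * Real.pi)) < ε := by
  have hπ : (0 : ℝ) < 2 * Real.pi := by positivity
  induction y using QuotientAddGroup.induction_on with
  | H a =>
    obtain ⟨k, m, hkm⟩ := harm_approx (a / (2 * Real.pi)) (div_pos hε hπ)
    refine ⟨k, ?_⟩
    have hz : ((2 * Real.pi * m : ℝ) : AddCircle (2 * Real.pi)) = 0 := by
      rw [AddCircle.coe_eq_zero_iff]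
      exact ⟨m, by push_cast [zsmul_eq_mul]; ring⟩
    have key : dist ((a : AddCircle (2 * Real.pi)))
        ((2 * Real.pi * Hsum (k + 1) : ℝ) : AddCircle (2 * Real.pi))
        ≤ |a + 2 * Real.pi * m - 2 * Real.pi * Hsum (k + 1)| := by
      rw [dist_eq_norm]
      calc ‖((a : AddCircle (2 * Real.pi))) - ((2 * Real.pi * Hsum (k + 1) : ℝ) :
              AddCircle (2 * Real.pi))‖
          = ‖((a + 2 * Real.pi * m - 2 * Real.pi * Hsum (k + 1) : ℝ) :
              AddCircle (2 * Real.pi))‖ := by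
            rw [show (a + 2 * Real.pi * (m : ℝ) - 2 * Real.pi * Hsum (k + 1) : ℝ)
                  = (a - 2 * Real.pi * Hsum (k + 1)) + 2 * Real.pi * m from by ring,
              QuotientAddGroup.mk_add, QuotientAddGroup.mk_sub, hz, add_zero]
        _ ≤ ‖(a + 2 * Real.pi * m - 2 * Real.pi * Hsum (k + 1) : ℝ)‖ :=
            QuotientAddGroup.norm_mk_le_norm
        _ = |a + 2 * Real.pi * m - 2 * Real.pi * Hsum (k + 1)| := Real.norm_eq_abs _
    have heq : |a + 2 * Real.pi * m - 2 * Real.pi * Hsum (k + 1)|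
        = 2 * Real.pi * |Hsum (k + 1) - (a / (2 * Real.pi) + m)| := by
      have h2π : (2 * Real.pi) ≠ 0 := ne_of_gt hπ
      have : a + 2 * Real.pi * (m : ℝ) - 2 * Real.pi * Hsum (k + 1)
          = -(2 * Real.pi * (Hsum (k + 1) - (a / (2 * Real.pi) + m))) := by
        field_simp
        ring
      rw [this, abs_neg, abs_mul, abs_of_pos hπ]
    calc dist ((a : AddCircle (2 * Real.pi)))
          ((2 * Real.pi * Hsum (k + 1) : ℝ) : AddCircle (2 * Real.pi)) ≤ _ := key
      _ = 2 * Real.pi * |Hsum (k + 1) - (a / (2 * Real.pi) + m)| := heq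
      _ < 2 * Real.pi * (ε / (2 * Real.pi)) := by
          exact mul_lt_mul_of_pos_left hkm hπ
      _ = ε := by field_simp

end AuxHarm

theorem stmt18 (f : ℕ → AddCircle (2 * Real.pi) ≃ₜ AddCircle (2 * Real.pi))
    (hodd : ∀ (k : ℕ) (x : AddCircle (2 * Real.pi)),
      f (2 * k + 1) x = x + ((2 * Real.pi * ∑ i ∈ Finset.range (k + 1), (1 : ℝ) / (i + 1) : ℝ) :
        AddCircle (2 * Real.pi)))
    (heven : ∀ (k : ℕ) (x : AddCircle (2 * Real.pi)),
      f (2 * k + 2) x = x - ((2 * Real.pi * ∑ i ∈ Finset.range (k + 1), (1 : ℝ) / (i + 1) : ℝ) :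
        AddCircle (2 * Real.pi))) :
    (∀ (x : AddCircle (2 * Real.pi)) (n : ℤ), omegaMap f (2 * n) x = x) ∧
    Equicont f ∧
    (∀ x : AddCircle (2 * Real.pi), Dense (orbit' f x)) ∧
    TopTransitive f ∧
    ¬ (∃ δ > (0 : ℝ), ∀ (x : AddCircle (2 * Real.pi)) (U : Set (AddCircle (2 * Real.pi))),
        IsOpen U → x ∈ U → ∃ m : ℤ, δ < diam (omegaMap f m '' U)) := by
  have hπ : (0 : ℝ) < 2 * Real.pi := by positivity
  set c : ℕ → AddCircle (2 * Real.pi) :=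
    fun k => ((2 * Real.pi * Hsum (k + 1) : ℝ) : AddCircle (2 * Real.pi)) with hc
  have hodd' : ∀ (k : ℕ) (x : AddCircle (2 * Real.pi)), f (2 * k + 1) x = x + c k := hodd
  have heven' : ∀ (k : ℕ) (x : AddCircle (2 * Real.pi)), f (2 * k + 2) x = x - c k := heven
  have hpos : ∀ k : ℕ, (∀ x, posComp f (2 * k) x = x) ∧
      (∀ x, posComp f (2 * k + 1) x = x + c k) := by
    intro k
    induction k with
    | zero =>
      refine ⟨fun x => rfl, fun x => ?_⟩
      exact hodd' 0 x
    | succ k ih =>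
      have h0 : ∀ x, posComp f (2 * (k + 1)) x = x := by
        intro x
        show f (2 * k + 2) (posComp f (2 * k + 1) x) = x
        rw [ih.2 x, heven' k]
        exact add_sub_cancel_right x (c k)
      refine ⟨h0, fun x => ?_⟩
      show f (2 * (k + 1) + 1) (posComp f (2 * (k + 1)) x) = x + c (k + 1)
      rw [h0 x]
      exact hodd' (k + 1) x
  have hinv : ∀ (n : ℕ) (x), negComp f n (posComp f n x) = x := by
    intro n
    induction n with
    | zero => intro x; rfl
    | succ n ih =>
      intro x
      show negComp f n ((f (n + 1)).symm (f (n + 1) (posComp f n x))) = x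
      rw [Homeomorph.symm_apply_apply]
      exact ih x
  have hneg_even : ∀ (k : ℕ) (x), negComp f (2 * k) x = x := by
    intro k x
    have h := hinv (2 * k) x
    rwa [(hpos k).1 x] at h
  have hneg_odd : ∀ (k : ℕ) (x), negComp f (2 * k + 1) x = x - c k := by
    intro k x
    have h := hinv (2 * k + 1) (x - c k)
    rwa [(hpos k).2 (x - c k), sub_add_cancel] at h
  have htr : ∀ n : ℤ, ∃ d, ∀ x, omegaMap f n x = x + d := by
    intro n
    simp only [omegaMap]
    split_ifs with h
    · rcases Nat.even_or_odd n.toNat with ⟨k, hk⟩ | ⟨k, hk⟩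
      · exact ⟨0, fun x => by rw [show n.toNat = 2 * k from by omega, (hpos k).1 x, add_zero]⟩
      · exact ⟨c k, fun x => by rw [show n.toNat = 2 * k + 1 from hk, (hpos k).2 x]⟩
    · rcases Nat.even_or_odd (-n).toNat with ⟨k, hk⟩ | ⟨k, hk⟩
      · exact ⟨0, fun x => by rw [show (-n).toNat = 2 * k from by omega, hneg_even k x, add_zero]⟩
      · exact ⟨-c k, fun x => by
          rw [show (-n).toNat = 2 * k + 1 from hk, hneg_odd k x, sub_eq_add_neg]⟩
  have hper : ∀ (x : AddCircle (2 * Real.pi)) (n : ℤ), omegaMap f (2 * n) x = x := by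
    intro x n
    simp only [omegaMap]
    split_ifs with h
    · rw [show (2 * n).toNat = 2 * n.toNat from by omega]
      exact (hpos n.toNat).1 x
    · rw [show (-(2 * n)).toNat = 2 * (-n).toNat from by omega]
      exact hneg_even (-n).toNat x
  have hom_odd : ∀ (k : ℕ) (x : AddCircle (2 * Real.pi)),
      omegaMap f (2 * (k : ℤ) + 1) x = x + c k := by
    intro k x
    simp only [omegaMap]
    rw [if_pos (by positivity)]
    rw [show (2 * (k : ℤ) + 1).toNat = 2 * k + 1 from by omega]
    exact (hpos k).2 x
  have hdense : ∀ x : AddCircle (2 * Real.pi), Dense (orbit' f x) := by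
    intro x
    rw [Metric.dense_iff]
    intro y r hr
    obtain ⟨k, hk⟩ := harm_dense_circle (y - x) hr
    refine ⟨x + c k, ?_, ⟨(2 * (k : ℤ) + 1), hom_odd k x⟩⟩
    rw [Metric.mem_ball, dist_eq_norm, show x + c k - y = -((y - x) - c k) from by abel,
      norm_neg, ← dist_eq_norm]
    exact hk
  refine ⟨hper, ?_, hdense, ?_, ?_⟩
  · -- Equicont
    intro ε hε
    refine ⟨ε, hε, fun a b hab n => ?_⟩
    obtain ⟨d, hd⟩ := htr n
    rw [hd a, hd b, dist_eq_norm, show a + d - (b + d) = a - b from by abel, ← dist_eq_norm]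
    exact hab
  · -- TopTransitive
    intro U V hU hV hUne hVne
    obtain ⟨x, hx⟩ := hUne
    obtain ⟨y, ⟨n, hn⟩, hyV⟩ := (hdense x).exists_mem_open hV hVne
    exact ⟨n, y, ⟨x, hx, hn⟩, hyV⟩
  · -- not sensitive
    rintro ⟨δ, hδ, h⟩
    obtain ⟨m, hm⟩ := h 0 (Metric.ball 0 (δ / 4)) Metric.isOpen_ball
      (Metric.mem_ball_self (by positivity))
    obtain ⟨d, hd⟩ := htr m
    have himg : omegaMap f m '' Metric.ball 0 (δ / 4)
        = (fun z => z + d) '' Metric.ball 0 (δ / 4) := Set.image_congr fun z _ => hd z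
    have hiso : Isometry (fun z : AddCircle (2 * Real.pi) => z + d) :=
      Isometry.of_dist_eq fun a b => by
        rw [dist_eq_norm, show a + d - (b + d) = a - b from by abel, ← dist_eq_norm]
    rw [himg, hiso.diam_image] at hm
    have hball := Metric.diam_ball (x := (0 : AddCircle (2 * Real.pi)))
      (le_of_lt (by positivity : (0:ℝ) < δ / 4))
    linarith
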